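/- Let α(t), β(t), γ(t), δ(t) be smooth families of 1-forms with dα = α ∧ β, dβ = α ∧ γ, dγ = β ∧ γ + α ∧ δ. Then β̇ ∧ dβ = d(α ∧ γ̇) + α ∧ α̇ ∧ δ. In particular, if δ = 0 for all t (transversely homographic case), then β̇ ∧ dβ is exact with primitive α ∧ γ̇ lying in the ideal of the foliation. -/
import Mathlib


/-- An abstract algebra of (differential) forms on a smooth manifold `M`: a normed
`ℝ`-algebra `Ω` (the algebra of smooth differential forms, normed so that one can
speak of smooth/differentiable one-parameter families), equipped with a grading
predicate `IsDeg n a` ("`a` is a homogeneous form of degree `n`") and an exterior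
differential `d`, a continuous linear map satisfying the graded Leibniz rule,
graded commutativity and `d ∘ d = 0`. -/
class FormAlgebra (Ω : Type*) [NormedRing Ω] [NormedAlgebra ℝ Ω] where
  /-- `IsDeg n a` means that `a` is a homogeneous form of degree `n`. -/
  IsDeg : ℕ → Ω → Prop
  /-- The exterior differential. -/
  d : Ω →L[ℝ] Ω
  isDeg_d : ∀ {n : ℕ} {a : Ω}, IsDeg n a → IsDeg (n + 1) (d a)
  isDeg_mul : ∀ {m n : ℕ} {a b : Ω}, IsDeg m a → IsDeg n b → IsDeg (m + n) (a * b)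
  d_mul : ∀ {m : ℕ} (a b : Ω), IsDeg m a →
    d (a * b) = d a * b + (-1 : ℝ) ^ m • (a * d b)
  deg_mul_comm : ∀ {m n : ℕ} (a b : Ω), IsDeg m a → IsDeg n b →
    a * b = (-1 : ℝ) ^ (m * n) • (b * a)
  d_d : ∀ a : Ω, d (d a) = 0

open FormAlgebra

/-- Let `α(t), β(t), γ(t), δ(t)` be smooth families of 1-forms with `dα = α ∧ β`,
`dβ = α ∧ γ`, `dγ = β ∧ γ + α ∧ δ`.  Then `β̇ ∧ dβ = d(α ∧ γ̇) + α ∧ α̇ ∧ δ`.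
In particular, if `δ = 0` for all `t` (the transversely homographic case), then
`β̇ ∧ dβ` is exact with primitive `α ∧ γ̇` lying in the ideal of the foliation. -/
theorem statement14 {Ω : Type*} [NormedRing Ω] [NormedAlgebra ℝ Ω] [FormAlgebra Ω]
    (α β γ δ α' β' γ' : ℝ → Ω)
    (hαd : ∀ t, HasDerivAt α (α' t) t)
    (hβd : ∀ t, HasDerivAt β (β' t) t)
    (hγd : ∀ t, HasDerivAt γ (γ' t) t)
    (hα : ∀ t, IsDeg 1 (α t)) (hβ : ∀ t, IsDeg 1 (β t))
    (hγ : ∀ t, IsDeg 1 (γ t)) (hδ : ∀ t, IsDeg 1 (δ t))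
    (hα' : ∀ t, IsDeg 1 (α' t)) (hβ' : ∀ t, IsDeg 1 (β' t)) (hγ' : ∀ t, IsDeg 1 (γ' t))
    (heq1 : ∀ t, d (α t) = α t * β t)
    (heq2 : ∀ t, d (β t) = α t * γ t)
    (heq3 : ∀ t, d (γ t) = β t * γ t + α t * δ t) :
    (∀ t, β' t * d (β t) = d (α t * γ' t) + α t * α' t * δ t) ∧
      (∀ t, δ t = 0 → β' t * d (β t) = d (α t * γ' t)) := by
  classical
  have hanti : ∀ a b : Ω, IsDeg 1 a → IsDeg 1 b → a * b = -(b * a) := by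
    intro a b ha hb
    have h := deg_mul_comm a b ha hb
    simpa using h
  have hanti3 : ∀ a b c : Ω, IsDeg 1 a → IsDeg 1 b → a * (b * c) = -(b * (a * c)) := by
    intro a b c ha hb
    rw [← mul_assoc, hanti a b ha hb, neg_mul, mul_assoc]
  have hd1 : ∀ a b : Ω, IsDeg 1 a → d (a * b) = d a * b - a * d b := by
    intro a b ha
    rw [d_mul a b ha]
    simp [sub_eq_add_neg]
  have main : ∀ t, β' t * d (β t) = d (α t * γ' t) + α t * α' t * δ t := by
    intro t
    have hdβ' : HasDerivAt (fun s => d (β s)) (d (β' t)) t :=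
      (FormAlgebra.d (Ω := Ω)).hasFDerivAt.comp_hasDerivAt t (hβd t)
    have hdβ'2 : HasDerivAt (fun s => d (β s)) (α' t * γ t + α t * γ' t) t := by
      have h := (hαd t).mul (hγd t)
      exact h.congr_of_eventuallyEq (Filter.Eventually.of_forall fun s => heq2 s)
    have e2' : d (β' t) = α' t * γ t + α t * γ' t := hdβ'.unique hdβ'2
    have hαγ' : α t * γ' t = d (β' t) - α' t * γ t := by rw [e2']; abel
    have key : d (α t * γ' t)
        = -((α' t * β t + α t * β' t) * γ t - α' t * (β t * γ t + α t * δ t)) := by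
      have hdα' : HasDerivAt (fun s => d (α s)) (d (α' t)) t :=
        (FormAlgebra.d (Ω := Ω)).hasFDerivAt.comp_hasDerivAt t (hαd t)
      have hdα'2 : HasDerivAt (fun s => d (α s)) (α' t * β t + α t * β' t) t := by
        have h := (hαd t).mul (hβd t)
        exact h.congr_of_eventuallyEq (Filter.Eventually.of_forall fun s => heq1 s)
      have e1' : d (α' t) = α' t * β t + α t * β' t := hdα'.unique hdα'2
      rw [hαγ', map_sub, d_d, hd1 (α' t) (γ t) (hα' t), e1', heq3]
      abel
    rw [heq2 t, key]
    have h1 : β' t * (α t * γ t) = -(α t * (β' t * γ t)) :=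
      hanti3 _ _ _ (hβ' t) (hα t)
    have h2 : α t * (α' t * δ t) = -(α' t * (α t * δ t)) :=
      hanti3 _ _ _ (hα t) (hα' t)
    simp only [add_mul, mul_add, mul_assoc, neg_sub, h1, h2]
    abel
  refine ⟨main, fun t h0 => ?_⟩
  have := main t
  rw [h0] at this
  simpa using this
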